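/- For every integer m ≥ 1 and every n ∈ ℕ, the determinantal identity Ψ_m(Δ²S)_n · Ψ_{m+1}(ΔS)_{n+1} − Ψ_m(Δ²S)_{n+1} · Ψ_{m+1}(ΔS)_n = Ψ_{m+1}(Δ²S)_n · Ψ_m(ΔS)_{n+1} holds. (This is the bilinear relation F_k^n F_{k+2}^{n+1} − F_k^{n+1} F_{k+2}^n = F_{k+3}^n F_{k−1}^{n+1} of the lattice Boussinesq molecule solution in the case k = 3m+2.) -/

import Mathlib

/-- Forward difference operator: `(Δ v) n = v (n+1) - v n`. -/
def Δ (v : ℕ → ℝ) : ℕ → ℝ := fun n => v (n + 1) - v n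

/-- `Psi k v n` is the determinant of the `k × k` matrix whose `(i, j)` entry is
`(Δ^[2*i] v) (n + j)`.  For `k = 0` this is the empty determinant `1`. -/
noncomputable def Psi (k : ℕ) (v : ℕ → ℝ) (n : ℕ) : ℝ :=
  (Matrix.of fun i j : Fin k => (Δ^[2 * i.val] v) (n + j.val)).det

/-- determinant of the matrix whose columns are `c j` -/
noncomputable def fdet (N : ℕ) (c : Fin N → Fin N → ℝ) : ℝ :=
  (Matrix.of fun i j : Fin N => c j i).det

lemma fdet_alt (N : ℕ) (c : Fin N → Fin N → ℝ) :
    fdet N c = Matrix.detRowAlternating c := by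
  rw [fdet, ← Matrix.det_transpose]
  rfl

lemma fdet_rows (N : ℕ) (c : Fin N → Fin N → ℝ) :
    fdet N c = (Matrix.of c).det := fdet_alt N c

lemma psi_eq (k : ℕ) (v : ℕ → ℝ) (n : ℕ) :
    Psi k v n = fdet k (fun j i => (Δ^[2 * i.val] v) (n + j.val)) := rfl

lemma colred (K : ℕ) (g : Fin (K+1) → ℕ → ℝ) (n : ℕ) :
    fdet (K+1) (fun j i => g i (n + j.val))
      = fdet (K+1) (Fin.cons (fun i => g i n) (fun j i => Δ (g i) (n + j.val))) := by
  classical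
  set A : Matrix (Fin (K+1)) (Fin (K+1)) ℝ := Matrix.of fun i j => g i (n + j.val) with hA
  set T : Matrix (Fin (K+1)) (Fin (K+1)) ℝ :=
    Matrix.of (fun k j => (if k = j then (1:ℝ) else 0) - (if k.val + 1 = j.val then 1 else 0))
    with hT
  have hTtri : T.BlockTriangular id := by
    intro k j h
    have hj : j.val < k.val := h
    have h1 : ¬ (k = j) := by
      intro h'; subst h'; omega
    have h2 : ¬ (k.val + 1 = j.val) := by omega
    simp [hT, h1, h2]
  have hTdet : T.det = 1 := by
    rw [Matrix.det_of_upperTriangular hTtri]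
    apply Finset.prod_eq_one
    intro i _
    simp [hT]
  have hmul : ∀ i j, (A * T) i j
      = (Fin.cons (fun i => g i n) (fun (j : Fin K) i => Δ (g i) (n + j.val)) :
          Fin (K+1) → Fin (K+1) → ℝ) j i := by
    intro i j
    rw [Matrix.mul_apply]
    have hsplit : ∀ k : Fin (K+1), A i k * T k j
        = (if k = j then A i k else 0) - (if k.val + 1 = j.val then A i k else 0) := by
      intro k
      simp only [hT, Matrix.of_apply, mul_sub, mul_ite, mul_one, mul_zero]
    rw [Finset.sum_congr rfl (fun k _ => hsplit k), Finset.sum_sub_distrib,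
      Finset.sum_ite_eq' Finset.univ j (fun k => A i k), if_pos (Finset.mem_univ j)]
    induction j using Fin.cases with
    | zero =>
      have : ∀ k : Fin (K+1), (if k.val + 1 = (0 : Fin (K+1)).val then A i k else 0) = 0 := by
        intro k; simp
      rw [Finset.sum_congr rfl (fun k _ => this k)]
      simp [hA]
    | succ j' =>
      have : ∀ k : Fin (K+1), (if k.val + 1 = (j'.succ : Fin (K+1)).val then A i k else 0)
          = (if k = j'.castSucc then A i k else 0) := by
        intro k
        congr 1
        simp only [Fin.val_succ, eq_iff_iff, Fin.ext_iff, Fin.coe_castSucc]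
        omega
      rw [Finset.sum_congr rfl (fun k _ => this k),
        Finset.sum_ite_eq' Finset.univ j'.castSucc (fun k => A i k),
        if_pos (Finset.mem_univ _)]
      simp only [hA, Matrix.of_apply, Fin.cons_succ, Fin.val_succ, Fin.coe_castSucc, Δ,
        Nat.add_assoc]
  calc fdet (K+1) (fun j i => g i (n + j.val)) = A.det := rfl
    _ = A.det * T.det := by rw [hTdet, mul_one]
    _ = (A * T).det := (Matrix.det_mul A T).symm
    _ = _ := by
        unfold fdet
        congr 1
        ext i j
        exact hmul i j

/-- the distinguished last basis vector -/
def eevec (r : ℕ) : Fin (r+2) → ℝ := fun i => if i = Fin.last (r+1) then 1 else 0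

lemma hat (K : ℕ) (c : Fin (K+1) → Fin (K+2) → ℝ) :
    fdet (K+2) (Fin.cons (eevec K) c)
      = (-1)^(K+1) * fdet (K+1) (fun j i => c j i.castSucc) := by
  classical
  rw [fdet_rows, Matrix.det_succ_row_zero]
  rw [Finset.sum_eq_single (Fin.last (K+1))]
  · rw [fdet_rows]
    simp only [Matrix.of_apply, Fin.cons_zero, eevec, Fin.val_last, eq_self_iff_true, if_true,
      mul_one]
    refine congrArg (fun z => (-1)^(K+1) * z) ?_
    congr 1
    ext i j
    simp [Fin.succAbove_last, Fin.cons_succ]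
  · intro b _ hb
    simp only [Matrix.of_apply, Fin.cons_zero, eevec]
    rw [if_neg hb]
    ring
  · intro h
    exact absurd (Finset.mem_univ _) h

lemma fdet_cons_add (N : ℕ) (x y : Fin (N+1) → ℝ) (c : Fin N → Fin (N+1) → ℝ) :
    fdet (N+1) (Fin.cons (x + y) c)
      = fdet (N+1) (Fin.cons x c) + fdet (N+1) (Fin.cons y c) := by
  simp only [fdet_alt]
  have h := (Matrix.detRowAlternating (R := ℝ) (n := Fin (N+1))).map_update_add
    (Fin.cons x c) 0 x y
  simpa only [Fin.update_cons_zero] using h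

lemma fdet_cons_smul (N : ℕ) (t : ℝ) (x : Fin (N+1) → ℝ) (c : Fin N → Fin (N+1) → ℝ) :
    fdet (N+1) (Fin.cons (t • x) c) = t * fdet (N+1) (Fin.cons x c) := by
  simp only [fdet_alt]
  have h := (Matrix.detRowAlternating (R := ℝ) (n := Fin (N+1))).map_update_smul
    (Fin.cons x c) 0 t x
  simpa only [Fin.update_cons_zero, smul_eq_mul] using h

lemma fdet_cons_cons_add (N : ℕ) (z x y : Fin (N+2) → ℝ) (c : Fin N → Fin (N+2) → ℝ) :
    fdet (N+2) (Fin.cons z (Fin.cons (x + y) c))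
      = fdet (N+2) (Fin.cons z (Fin.cons x c)) + fdet (N+2) (Fin.cons z (Fin.cons y c)) := by
  simp only [fdet_alt]
  have h := (Matrix.detRowAlternating (R := ℝ) (n := Fin (N+2))).map_update_add
    (Fin.cons z (Fin.cons x c)) ((0 : Fin (N+1)).succ) x y
  simpa only [← Fin.cons_update, Fin.update_cons_zero] using h

lemma fdet_cons_cons_self (N : ℕ) (x : Fin (N+2) → ℝ) (c : Fin N → Fin (N+2) → ℝ) :
    fdet (N+2) (Fin.cons x (Fin.cons x c)) = 0 := by
  rw [fdet_alt]
  refine Matrix.detRowAlternating.map_eq_zero_of_eq _ (i := 0) (j := (0 : Fin (N+1)).succ) ?_ ?_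
  · simp
  · exact (Fin.succ_ne_zero _).symm

lemma fdet_cons_cons_range (N : ℕ) (x : Fin (N+2) → ℝ) (c : Fin N → Fin (N+2) → ℝ)
    (i : Fin N) :
    fdet (N+2) (Fin.cons (c i) (Fin.cons x c)) = 0 := by
  rw [fdet_alt]
  refine Matrix.detRowAlternating.map_eq_zero_of_eq _ (i := 0) (j := i.succ.succ) ?_ ?_
  · simp
  · exact (Fin.succ_ne_zero _).symm

lemma fdet_cons_cons_swap (N : ℕ) (x y : Fin (N+2) → ℝ) (c : Fin N → Fin (N+2) → ℝ) :
    fdet (N+2) (Fin.cons y (Fin.cons x c)) = - fdet (N+2) (Fin.cons x (Fin.cons y c)) := by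
  simp only [fdet_alt]
  have hcomp : (Fin.cons x (Fin.cons y c)) ∘ (Equiv.swap (0 : Fin (N+2)) 1)
      = Fin.cons y (Fin.cons x c) := by
    funext t
    simp only [Function.comp_apply]
    induction t using Fin.cases with
    | zero =>
      rw [Equiv.swap_apply_left]
      rw [show (1 : Fin (N+2)) = (0 : Fin (N+1)).succ from rfl]
      simp
    | succ s =>
      induction s using Fin.cases with
      | zero =>
        rw [show ((0 : Fin (N+1)).succ : Fin (N+2)) = 1 from rfl, Equiv.swap_apply_right]
        simp
      | succ s' =>
        rw [Equiv.swap_apply_of_ne_of_ne (Fin.succ_ne_zero _)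
          (by rw [show (1 : Fin (N+2)) = (0 : Fin (N+1)).succ from rfl]
              exact fun h => Fin.succ_ne_zero s' (Fin.succ_injective _ h))]
        simp [Fin.cons_succ]
  rw [← hcomp]
  exact AlternatingMap.map_swap (Matrix.detRowAlternating (R := ℝ) (n := Fin (N+2)))
    (Fin.cons x (Fin.cons y c)) (show (0 : Fin (N+2)) ≠ 1 by simp)

lemma fdet_cons_snoc (N : ℕ) (x y : Fin (N+2) → ℝ) (c : Fin N → Fin (N+2) → ℝ) :
    fdet (N+2) (Fin.cons x (Fin.snoc c y))
      = (-1)^N * fdet (N+2) (Fin.cons x (Fin.cons y c)) := by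
  simp only [fdet_alt]
  set τ : Equiv.Perm (Fin (N+2)) :=
    (Fin.last (N+1)).cycleRange * Equiv.swap 0 (Fin.last (N+1)) with hτ
  have hcomp : (Fin.cons x (Fin.cons y c)) ∘ τ = Fin.cons x (Fin.snoc c y) := by
    funext t
    simp only [Function.comp_apply, hτ, Equiv.Perm.mul_apply]
    induction t using Fin.cases with
    | zero =>
      rw [Equiv.swap_apply_left, Fin.cycleRange_self]
      simp
    | succ s =>
      rw [Fin.cons_succ]
      induction s using Fin.lastCases with
      | last =>
        rw [Fin.succ_last, Equiv.swap_apply_right, Fin.snoc_last,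
          Fin.cycleRange_of_lt Fin.last_pos, zero_add,
          show (1 : Fin (N+2)) = (0 : Fin (N+1)).succ from rfl, Fin.cons_succ, Fin.cons_zero]
      | cast s' =>
        have h1 : (s'.castSucc).succ ≠ 0 := Fin.succ_ne_zero _
        have h2 : (s'.castSucc).succ ≠ Fin.last (N+1) := by
          rw [Fin.succ_castSucc]
          exact Fin.ne_of_lt (Fin.castSucc_lt_last _)
        rw [Equiv.swap_apply_of_ne_of_ne h1 h2,
          Fin.cycleRange_of_lt (by rw [Fin.succ_castSucc]; exact Fin.castSucc_lt_last _),
          Fin.succ_castSucc, Fin.coeSucc_eq_succ, Fin.cons_succ, Fin.cons_succ,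
          Fin.snoc_castSucc]
  rw [← hcomp]
  rw [AlternatingMap.map_perm (Matrix.detRowAlternating (R := ℝ) (n := Fin (N+2))) _ τ]
  have hsign : Equiv.Perm.sign τ = (-1)^N := by
    rw [hτ, Equiv.Perm.sign_mul, Fin.sign_cycleRange,
      Equiv.Perm.sign_swap (Fin.ne_of_lt Fin.last_pos)]
    simp [Fin.val_last, pow_succ]
  rw [hsign]
  rcases Nat.even_or_odd N with h | h
  · simp [h.neg_one_pow, Even.neg_one_pow h]
  · simp [h.neg_one_pow, Odd.neg_one_pow h]

lemma fdet_not_linearIndependent (r : ℕ) {W : Submodule ℝ (Fin (r+2) → ℝ)} (hW : W ≠ ⊤)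
    (v : Fin (r+2) → Fin (r+2) → ℝ) (hv : ∀ t, v t ∈ W) : fdet (r+2) v = 0 := by
  rw [fdet_alt]
  refine AlternatingMap.map_linearDependent _ v (fun hli => ?_)
  have hli' : LinearIndependent ℝ (fun t => (⟨v t, hv t⟩ : W)) :=
    hli.of_comp W.subtype
  have hcard := hli'.fintype_card_le_finrank
  have hlt : Module.finrank ℝ W < Module.finrank ℝ (Fin (r+2) → ℝ) :=
    Submodule.finrank_lt hW
  rw [Module.finrank_fin_fun] at hlt
  rw [Fintype.card_fin] at hcard
  omega

lemma pluecker (r : ℕ) (B : Fin r → Fin (r+2) → ℝ) (x1 x2 x3 x4 : Fin (r+2) → ℝ) :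
    fdet (r+2) (Fin.cons x1 (Fin.cons x2 B)) * fdet (r+2) (Fin.cons x3 (Fin.cons x4 B))
      - fdet (r+2) (Fin.cons x1 (Fin.cons x3 B)) * fdet (r+2) (Fin.cons x2 (Fin.cons x4 B))
      + fdet (r+2) (Fin.cons x1 (Fin.cons x4 B)) * fdet (r+2) (Fin.cons x2 (Fin.cons x3 B))
      = 0 := by
  classical
  set s : Set (Fin (r+2) → ℝ) := {x2, x3, x4} ∪ Set.range B with hs
  by_cases hspan : Submodule.span ℝ s = ⊤
  · let L : (Fin (r+2) → ℝ) →ₗ[ℝ] ℝ :=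
      { toFun := fun x =>
          fdet (r+2) (Fin.cons x (Fin.cons x2 B)) * fdet (r+2) (Fin.cons x3 (Fin.cons x4 B))
          - fdet (r+2) (Fin.cons x (Fin.cons x3 B)) * fdet (r+2) (Fin.cons x2 (Fin.cons x4 B))
          + fdet (r+2) (Fin.cons x (Fin.cons x4 B)) * fdet (r+2) (Fin.cons x2 (Fin.cons x3 B))
        map_add' := by
          intro a b
          simp only [fdet_cons_add]
          ring
        map_smul' := by
          intro t a
          simp only [fdet_cons_smul, RingHom.id_apply, smul_eq_mul]
          ring }
    have hsub : s ⊆ (LinearMap.ker L : Set (Fin (r+2) → ℝ)) := by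
      intro z hz
      rw [SetLike.mem_coe, LinearMap.mem_ker]
      rcases hz with (rfl | rfl | rfl) | ⟨i, rfl⟩
      · show fdet (r+2) (Fin.cons z (Fin.cons z B)) * _ - _ + _ = 0
        rw [fdet_cons_cons_self]
        ring
      · show _ - fdet (r+2) (Fin.cons z (Fin.cons z B)) * _ + _ = 0
        rw [fdet_cons_cons_self, fdet_cons_cons_swap r x2 z]
        ring
      · show _ - _ + fdet (r+2) (Fin.cons z (Fin.cons z B)) * _ = 0
        rw [fdet_cons_cons_self, fdet_cons_cons_swap r x2 z,
          fdet_cons_cons_swap r x3 z]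
        ring
      · show L (B i) = 0
        show fdet (r+2) (Fin.cons (B i) (Fin.cons x2 B)) * _
          - fdet (r+2) (Fin.cons (B i) (Fin.cons x3 B)) * _
          + fdet (r+2) (Fin.cons (B i) (Fin.cons x4 B)) * _ = 0
        rw [fdet_cons_cons_range, fdet_cons_cons_range, fdet_cons_cons_range]
        ring
    have hmem : x1 ∈ Submodule.span ℝ s := by rw [hspan]; exact Submodule.mem_top
    have : L x1 = 0 := (Submodule.span_le.mpr hsub) hmem
    simpa [L] using this
  · have hz : ∀ a b : Fin (r+2) → ℝ, a ∈ s → b ∈ s →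
        fdet (r+2) (Fin.cons a (Fin.cons b B)) = 0 := by
      intro a b ha hb
      refine fdet_not_linearIndependent r hspan _ (fun t => ?_)
      induction t using Fin.cases with
      | zero => exact Submodule.subset_span (by simpa using ha)
      | succ u =>
        rw [Fin.cons_succ]
        induction u using Fin.cases with
        | zero => exact Submodule.subset_span (by simpa using hb)
        | succ w =>
          rw [Fin.cons_succ]
          exact Submodule.subset_span (Or.inr (Set.mem_range_self w))
    have h34 := hz x3 x4 (by simp [hs]) (by simp [hs])
    have h24 := hz x2 x4 (by simp [hs]) (by simp [hs])
    have h23 := hz x2 x3 (by simp [hs]) (by simp [hs])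
    rw [h34, h24, h23]
    ring
noncomputable section

def uvec (S : ℕ → ℝ) (r p : ℕ) : Fin (r+2) → ℝ := fun i => (Δ^[2*i.val+2] S) p
def avec (S : ℕ → ℝ) (r p : ℕ) : Fin (r+2) → ℝ := fun i => (Δ^[2*i.val+1] S) p
def Bfam (S : ℕ → ℝ) (r n : ℕ) : Fin r → Fin (r+2) → ℝ := fun j => uvec S r (n+1+j.val)

lemma avec_succ (S : ℕ → ℝ) (r n : ℕ) : avec S r (n+1) = avec S r n + uvec S r n := by
  funext i
  have h := Function.iterate_succ_apply' Δ (2*i.val+1) S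
  have h2 : (Δ^[2*i.val+2] S) n = (Δ^[2*i.val+1] S) (n+1) - (Δ^[2*i.val+1] S) n := by
    rw [show 2*i.val+2 = (2*i.val+1)+1 from rfl, h]
    rfl
  simp only [avec, uvec, Pi.add_apply]
  rw [h2]
  ring

lemma famA (S : ℕ → ℝ) (r n : ℕ) :
    (fun j : Fin (r+1) => uvec S r (n + j.val)) = Fin.cons (uvec S r n) (Bfam S r n) := by
  funext j
  induction j using Fin.cases with
  | zero => simp
  | succ j' =>
    rw [Fin.cons_succ]
    exact congrArg (uvec S r) (by simp only [Fin.val_succ]; omega)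

lemma famB (S : ℕ → ℝ) (r n : ℕ) :
    (fun j : Fin (r+1) => uvec S r ((n+1) + j.val))
      = Fin.snoc (Bfam S r n) (uvec S r (n+1+r)) := by
  funext j
  induction j using Fin.lastCases with
  | last =>
    rw [Fin.snoc_last]
    exact congrArg (uvec S r) (by simp)
  | cast j' =>
    rw [Fin.snoc_castSucc]
    exact congrArg (uvec S r) (by simp)

lemma famC (S : ℕ → ℝ) (r n : ℕ) :
    (fun j : Fin (r+2) => uvec S r (n + j.val))
      = Fin.cons (uvec S r n) (Fin.snoc (Bfam S r n) (uvec S r (n+1+r))) := by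
  funext j
  induction j using Fin.cases with
  | zero => simp
  | succ j' =>
    rw [Fin.cons_succ]
    induction j' using Fin.lastCases with
    | last =>
      rw [Fin.snoc_last]
      exact congrArg (uvec S r) (by simp only [Fin.val_succ, Fin.val_last]; omega)
    | cast j'' =>
      rw [Fin.snoc_castSucc]
      exact congrArg (uvec S r) (by simp only [Fin.val_succ, Fin.coe_castSucc]; omega)

/-- column-reduced form of `Psi (r+2) (Δ S) p` -/
lemma keyA (S : ℕ → ℝ) (r : ℕ) (p : ℕ) :
    Psi (r+2) (Δ S) p
      = fdet (r+2) (Fin.cons (avec S r p) (fun j : Fin (r+1) => uvec S r (p + j.val))) := by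
  rw [psi_eq]
  have h1 : (fun (j : Fin (r+2)) (i : Fin (r+2)) => (Δ^[2*i.val] (Δ S)) (p + j.val))
      = (fun j i => (fun q => (Δ^[2*i.val+1] S) q) (p + j.val)) := by
    funext j i
    rw [show 2*i.val+1 = 2*i.val + 1 from rfl, Function.iterate_add_apply]
    rfl
  rw [h1, colred (r+1) (fun i q => (Δ^[2*i.val+1] S) q) p]
  congr 1
  funext j
  induction j using Fin.cases with
  | zero =>
    rw [Fin.cons_zero, Fin.cons_zero]
    rfl
  | succ j' =>
    rw [Fin.cons_succ, Fin.cons_succ]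
    funext i
    show Δ (Δ^[2*i.val+1] S) (p + j'.val) = (Δ^[2*i.val+2] S) (p + j'.val)
    rw [show 2*i.val+2 = (2*i.val+1)+1 from rfl, Function.iterate_succ_apply' Δ (2*i.val+1) S]

/-- `Psi (r+2) (Δ^[2] S) n` as an fdet -/
lemma keyC (S : ℕ → ℝ) (r n : ℕ) :
    Psi (r+2) (Δ^[2] S) n
      = fdet (r+2) (Fin.cons (uvec S r n) (Fin.snoc (Bfam S r n) (uvec S r (n+1+r)))) := by
  rw [psi_eq, ← famC]
  rfl

/-- hat form of `Psi (r+1) (Δ^[2] S) n` -/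
lemma keyH (S : ℕ → ℝ) (r n : ℕ) (c : Fin (r+1) → Fin (r+2) → ℝ)
    (hc : ∀ (j : Fin (r+1)) (i : Fin (r+1)), c j i.castSucc = (Δ^[2*i.val] (Δ^[2] S)) (n + j.val)) :
    Psi (r+1) (Δ^[2] S) n = (-1)^(r+1) * fdet (r+2) (Fin.cons (eevec r) c) := by
  rw [hat r c]
  have : (fun (j : Fin (r+1)) (i : Fin (r+1)) => c j i.castSucc)
      = (fun j i => (Δ^[2*i.val] (Δ^[2] S)) (n + j.val)) := by
    funext j i; exact hc j i
  rw [this, ← psi_eq, ← mul_assoc, ← mul_pow]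
  norm_num
lemma keyH1 (S : ℕ → ℝ) (r n : ℕ) :
    Psi (r+1) (Δ^[2] S) n
      = (-1)^(r+1) * fdet (r+2) (Fin.cons (eevec r)
          (Fin.cons (uvec S r n) (Bfam S r n))) := by
  refine keyH S r n _ (fun j i => ?_)
  induction j using Fin.cases with
  | zero =>
    rw [Fin.cons_zero]
    simp only [Fin.val_zero, Nat.add_zero]
    rfl
  | succ j' =>
    rw [Fin.cons_succ]
    have harg : n + (j'.succ : Fin (r+1)).val = n+1+j'.val := by
      simp only [Fin.val_succ]; omega
    rw [harg]
    rfl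

lemma keyH3 (S : ℕ → ℝ) (r n : ℕ) :
    Psi (r+1) (Δ^[2] S) (n+1)
      = (-1)^(r+1) * fdet (r+2) (Fin.cons (eevec r)
          (Fin.snoc (Bfam S r n) (uvec S r (n+1+r)))) := by
  refine keyH S r (n+1) _ (fun j i => ?_)
  induction j using Fin.lastCases with
  | last =>
    rw [Fin.snoc_last]
    have harg : (n+1) + (Fin.last r).val = n+1+r := by simp
    rw [harg]
    rfl
  | cast j' =>
    rw [Fin.snoc_castSucc]
    have harg : (n+1) + (j'.castSucc : Fin (r+1)).val = n+1+j'.val := by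
      simp only [Fin.coe_castSucc]
    rw [harg]
    rfl

lemma keyH6 (S : ℕ → ℝ) (r n : ℕ) :
    Psi (r+1) (Δ S) (n+1)
      = (-1)^(r+1) * (fdet (r+2) (Fin.cons (eevec r)
            (Fin.cons (avec S r n) (Bfam S r n)))
          + fdet (r+2) (Fin.cons (eevec r)
            (Fin.cons (uvec S r n) (Bfam S r n)))) := by
  have hcol : Psi (r+1) (Δ S) (n+1)
      = fdet (r+1) (Fin.cons (fun i : Fin (r+1) => (Δ^[2*i.val+1] S) (n+1))
          (fun (j : Fin r) (i : Fin (r+1)) => Δ (Δ^[2*i.val+1] S) ((n+1) + j.val))) := by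
    rw [psi_eq]
    have h1 : (fun (j : Fin (r+1)) (i : Fin (r+1)) => (Δ^[2*i.val] (Δ S)) ((n+1) + j.val))
        = (fun j i => (fun q => (Δ^[2*i.val+1] S) q) ((n+1) + j.val)) := rfl
    rw [h1, colred r (fun i q => (Δ^[2*i.val+1] S) q) (n+1)]
  have hhat := hat r (Fin.cons (avec S r (n+1)) (Bfam S r n))
  have hmatch : (fun (j : Fin (r+1)) (i : Fin (r+1)) =>
        (Fin.cons (avec S r (n+1)) (Bfam S r n) : Fin (r+1) → Fin (r+2) → ℝ) j i.castSucc)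
      = Fin.cons (fun i : Fin (r+1) => (Δ^[2*i.val+1] S) (n+1))
          (fun (j : Fin r) (i : Fin (r+1)) => Δ (Δ^[2*i.val+1] S) ((n+1) + j.val)) := by
    funext j
    induction j using Fin.cases with
    | zero =>
      rw [Fin.cons_zero, Fin.cons_zero]
      rfl
    | succ j' =>
      rw [Fin.cons_succ, Fin.cons_succ]
      funext i
      show uvec S r (n+1+j'.val) i.castSucc = Δ (Δ^[2*i.val+1] S) ((n+1) + j'.val)
      rw [← Function.iterate_succ_apply' Δ (2*i.val+1) S]
      rfl
  rw [hmatch] at hhat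
  have hmain : Psi (r+1) (Δ S) (n+1)
      = (-1)^(r+1) * fdet (r+2) (Fin.cons (eevec r)
          (Fin.cons (avec S r (n+1)) (Bfam S r n))) := by
    rw [hcol, hhat, ← mul_assoc, ← mul_pow]
    norm_num
  rw [hmain, avec_succ, fdet_cons_cons_add]

theorem stmt8 (S : ℕ → ℝ) (m : ℕ) (hm : 1 ≤ m) (n : ℕ) :
    Psi m (Δ^[2] S) n * Psi (m + 1) (Δ S) (n + 1)
      - Psi m (Δ^[2] S) (n + 1) * Psi (m + 1) (Δ S) n
      = Psi (m + 1) (Δ^[2] S) n * Psi m (Δ S) (n + 1) := by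
  obtain ⟨r, rfl⟩ : ∃ r, m = r + 1 := ⟨m - 1, by omega⟩
  show Psi (r+1) (Δ^[2] S) n * Psi (r+2) (Δ S) (n+1)
      - Psi (r+1) (Δ^[2] S) (n+1) * Psi (r+2) (Δ S) n
      = Psi (r+2) (Δ^[2] S) n * Psi (r+1) (Δ S) (n+1)
  have h4 : Psi (r+2) (Δ S) n
      = fdet (r+2) (Fin.cons (avec S r n) (Fin.cons (uvec S r n) (Bfam S r n))) := by
    rw [keyA S r n, famA]
  have h2 : Psi (r+2) (Δ S) (n+1)
      = fdet (r+2) (Fin.cons (avec S r n) (Fin.snoc (Bfam S r n) (uvec S r (n+1+r))))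
        + fdet (r+2) (Fin.cons (uvec S r n) (Fin.snoc (Bfam S r n) (uvec S r (n+1+r)))) := by
    rw [keyA S r (n+1), famB, avec_succ, fdet_cons_add]
  have h5 := keyC S r n
  have h1 := keyH1 S r n
  have h3 := keyH3 S r n
  have h6 := keyH6 S r n
  rw [h1, h2, h3, h4, h5, h6]
  rw [fdet_cons_snoc r (avec S r n) (uvec S r (n+1+r)) (Bfam S r n),
    fdet_cons_snoc r (eevec r) (uvec S r (n+1+r)) (Bfam S r n),
    fdet_cons_snoc r (uvec S r n) (uvec S r (n+1+r)) (Bfam S r n)]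
  have hP := pluecker r (Bfam S r n) (eevec r) (avec S r n) (uvec S r n) (uvec S r (n+1+r))
  linear_combination ((-1:ℝ)^(r+1) * (-1)^(r+1)) * hP
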